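/- In Prisoner's Dilemma with payoffs u(C,C)=(3,3), u(C,D)=(0,5), u(D,C)=(5,0), u(D,D)=(1,1), a mixed strategy profile s is a PCE if and only if min(U_1(s), U_2(s)) ≥ 1; in particular (Cooperate, Cooperate) and (Defect, Defect) are PCE. -/

import Mathlib

open scoped BigOperators

section GameDefs

variable {A1 A2 : Type} [Fintype A1] [Fintype A2]

/-- A mixed strategy over a finite action set: nonnegative weights summing to 1. -/
def IsMixed {A : Type} [Fintype A] (s : A → ℝ) : Prop :=
  (∀ a, 0 ≤ s a) ∧ ∑ a, s a = 1

/-- Expected utility of a utility function `u` under mixed strategies `s1`, `s2`. -/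
noncomputable def EU (u : A1 → A2 → ℝ) (s1 : A1 → ℝ) (s2 : A2 → ℝ) : ℝ :=
  ∑ a1, ∑ a2, s1 a1 * s2 a2 * u a1 a2

/-- `s2` is a best response of player 2 (with utility `u2`) to `s1`. -/
def IsBR2 (u2 : A1 → A2 → ℝ) (s1 : A1 → ℝ) (s2 : A2 → ℝ) : Prop :=
  IsMixed s2 ∧ ∀ t2, IsMixed t2 → EU u2 s1 t2 ≤ EU u2 s1 s2

/-- `s1` is a best response of player 1 (with utility `u1`) to `s2`. -/
def IsBR1 (u1 : A1 → A2 → ℝ) (s2 : A2 → ℝ) (s1 : A1 → ℝ) : Prop :=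
  IsMixed s1 ∧ ∀ t1, IsMixed t1 → EU u1 t1 s2 ≤ EU u1 s1 s2

/-- `BU1`: the best utility player 1 can obtain if player 2 best responds. -/
noncomputable def BU1 (u1 u2 : A1 → A2 → ℝ) : ℝ :=
  sSup {x | ∃ s1 s2, IsMixed s1 ∧ IsBR2 u2 s1 s2 ∧ x = EU u1 s1 s2}

/-- `BU2`: the best utility player 2 can obtain if player 1 best responds. -/
noncomputable def BU2 (u1 u2 : A1 → A2 → ℝ) : ℝ :=
  sSup {x | ∃ s1 s2, IsMixed s2 ∧ IsBR1 u1 s2 s1 ∧ x = EU u2 s1 s2}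

/-- A (mixed) strategy profile. -/
def IsProfile (s : (A1 → ℝ) × (A2 → ℝ)) : Prop := IsMixed s.1 ∧ IsMixed s.2

/-- Perfect cooperative equilibrium. -/
def IsPCE (u1 u2 : A1 → A2 → ℝ) (s : (A1 → ℝ) × (A2 → ℝ)) : Prop :=
  IsProfile s ∧ BU1 u1 u2 ≤ EU u1 s.1 s.2 ∧ BU2 u1 u2 ≤ EU u2 s.1 s.2

/-- Nash equilibrium. -/
def IsNE (u1 u2 : A1 → A2 → ℝ) (s : (A1 → ℝ) × (A2 → ℝ)) : Prop :=
  IsBR1 u1 s.2 s.1 ∧ IsBR2 u2 s.1 s.2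

/-- `s` Pareto dominates `s'`. -/
def ParetoDom (u1 u2 : A1 → A2 → ℝ) (s s' : (A1 → ℝ) × (A2 → ℝ)) : Prop :=
  EU u1 s'.1 s'.2 ≤ EU u1 s.1 s.2 ∧ EU u2 s'.1 s'.2 ≤ EU u2 s.1 s.2

/-- `s` strongly Pareto dominates `s'`. -/
def StrongParetoDom (u1 u2 : A1 → A2 → ℝ) (s s' : (A1 → ℝ) × (A2 → ℝ)) : Prop :=
  ParetoDom u1 u2 s s' ∧
    (EU u1 s'.1 s'.2 < EU u1 s.1 s.2 ∨ EU u2 s'.1 s'.2 < EU u2 s.1 s.2)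

/-- α-perfect cooperative equilibrium. -/
def IsAlphaPCE (u1 u2 : A1 → A2 → ℝ) (α : ℝ) (s : (A1 → ℝ) × (A2 → ℝ)) : Prop :=
  IsProfile s ∧ α + BU1 u1 u2 ≤ EU u1 s.1 s.2 ∧ α + BU2 u1 u2 ≤ EU u2 s.1 s.2

/-- Max-PCE: an α-PCE such that no α'-PCE exists for α' > α. -/
def IsMPCE (u1 u2 : A1 → A2 → ℝ) (s : (A1 → ℝ) × (A2 → ℝ)) : Prop :=
  ∃ α, IsAlphaPCE u1 u2 α s ∧ ∀ α' s', IsAlphaPCE u1 u2 α' s' → α' ≤ α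

/-- Cooperative equilibrium: every deviation is either unprofitable when the other
player best responds, or leaves the other player strictly worse off no matter what,
in which case the other player can punish. -/
def IsCE (u1 u2 : A1 → A2 → ℝ) (s : (A1 → ℝ) × (A2 → ℝ)) : Prop :=
  IsProfile s ∧
  (∀ s1', IsMixed s1' →
    (sSup {x | ∃ s2', IsBR2 u2 s1' s2' ∧ x = EU u1 s1' s2'} ≤ EU u1 s.1 s.2) ∨
    (sSup {x | ∃ s2', IsMixed s2' ∧ x = EU u2 s1' s2'} < EU u2 s.1 s.2 ∧
      ∃ s2', IsMixed s2' ∧ EU u1 s1' s2' ≤ EU u1 s.1 s.2)) ∧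
  (∀ s2', IsMixed s2' →
    (sSup {x | ∃ s1', IsBR1 u1 s2' s1' ∧ x = EU u2 s1' s2'} ≤ EU u2 s.1 s.2) ∨
    (sSup {x | ∃ s1', IsMixed s1' ∧ x = EU u1 s1' s2'} < EU u1 s.1 s.2 ∧
      ∃ s1', IsMixed s1' ∧ EU u2 s1' s2' ≤ EU u2 s.1 s.2))

end GameDefs

/-- The point-mass (pure) strategy on action `a`. -/
def pt {A : Type} [DecidableEq A] (a : A) : A → ℝ := fun b => if b = a then 1 else 0

/-- Actions in Prisoner's Dilemma. -/
inductive PD | C | D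
  deriving DecidableEq

instance : Fintype PD := ⟨{PD.C, PD.D}, fun x => by cases x <;> simp⟩

/-- Player 1's payoffs in Prisoner's Dilemma. -/
def pdU1 : PD → PD → ℝ
  | PD.C, PD.C => 3
  | PD.C, PD.D => 0
  | PD.D, PD.C => 5
  | PD.D, PD.D => 1

/-- Player 2's payoffs in Prisoner's Dilemma. -/
def pdU2 : PD → PD → ℝ
  | PD.C, PD.C => 3
  | PD.C, PD.D => 5
  | PD.D, PD.C => 0
  | PD.D, PD.D => 1

/-- in Prisoner's Dilemma, a mixed profile is a PCE iff
`min(U_1(s), U_2(s)) ≥ 1`; in particular (C,C) and (D,D) are PCE. -/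

lemma sumPD (f : PD → ℝ) : ∑ a, f a = f PD.C + f PD.D := by
  rw [show (Finset.univ : Finset PD) = {PD.C, PD.D} from rfl]
  simp

lemma euPD (u : PD → PD → ℝ) (s1 s2 : PD → ℝ) :
    EU u s1 s2 = s1 PD.C * s2 PD.C * u PD.C PD.C + s1 PD.C * s2 PD.D * u PD.C PD.D
      + s1 PD.D * s2 PD.C * u PD.D PD.C + s1 PD.D * s2 PD.D * u PD.D PD.D := by
  simp [EU, sumPD]; ring

lemma mixedPtPD (a : PD) : IsMixed (pt a) := by
  constructor
  · intro b; unfold pt; split <;> norm_num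
  · cases a <;> simp [sumPD, pt]

lemma br2_eu1_le (s1 s2 : PD → ℝ) (h1 : IsMixed s1) (h2 : IsBR2 pdU2 s1 s2) :
    EU pdU1 s1 s2 ≤ 1 := by
  obtain ⟨h1n, h1s⟩ := h1
  obtain ⟨⟨h2n, h2s⟩, hbr⟩ := h2
  have hD := hbr (pt PD.D) (mixedPtPD PD.D)
  rw [sumPD] at h1s h2s
  rw [euPD] at hD ⊢
  rw [euPD] at hD
  simp [pt, pdU1, pdU2] at hD ⊢
  nlinarith [h1n PD.C, h1n PD.D, h2n PD.C, h2n PD.D, mul_nonneg (h1n PD.C) (h2n PD.C)]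

lemma br1_eu2_le (s1 s2 : PD → ℝ) (h2 : IsMixed s2) (h1 : IsBR1 pdU1 s2 s1) :
    EU pdU2 s1 s2 ≤ 1 := by
  obtain ⟨h2n, h2s⟩ := h2
  obtain ⟨⟨h1n, h1s⟩, hbr⟩ := h1
  have hD := hbr (pt PD.D) (mixedPtPD PD.D)
  rw [sumPD] at h1s h2s
  rw [euPD] at hD ⊢
  rw [euPD] at hD
  simp [pt, pdU1, pdU2] at hD ⊢
  nlinarith [h1n PD.C, h1n PD.D, h2n PD.C, h2n PD.D]

lemma br2_DD : IsBR2 pdU2 (pt PD.D) (pt PD.D) := by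
  refine ⟨mixedPtPD PD.D, fun t2 ht2 => ?_⟩
  obtain ⟨htn, hts⟩ := ht2
  rw [sumPD] at hts
  rw [euPD, euPD]
  simp [pt, pdU2]
  linarith [htn PD.C, htn PD.D]

lemma br1_DD : IsBR1 pdU1 (pt PD.D) (pt PD.D) := by
  refine ⟨mixedPtPD PD.D, fun t1 ht1 => ?_⟩
  obtain ⟨htn, hts⟩ := ht1
  rw [sumPD] at hts
  rw [euPD, euPD]
  simp [pt, pdU1]
  linarith [htn PD.C, htn PD.D]

lemma bu1_eq : BU1 pdU1 pdU2 = 1 := by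
  apply le_antisymm
  · apply csSup_le
    · exact ⟨1, pt PD.D, pt PD.D, mixedPtPD PD.D, br2_DD, by rw [euPD]; simp [pt, pdU1]⟩
    · rintro x ⟨s1, s2, hm1, hbr, rfl⟩
      exact br2_eu1_le s1 s2 hm1 hbr
  · apply le_csSup
    · exact ⟨1, by rintro x ⟨s1, s2, hm1, hbr, rfl⟩; exact br2_eu1_le s1 s2 hm1 hbr⟩
    · exact ⟨pt PD.D, pt PD.D, mixedPtPD PD.D, br2_DD, by rw [euPD]; simp [pt, pdU1]⟩

lemma bu2_eq : BU2 pdU1 pdU2 = 1 := by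
  apply le_antisymm
  · apply csSup_le
    · exact ⟨1, pt PD.D, pt PD.D, mixedPtPD PD.D, br1_DD, by rw [euPD]; simp [pt, pdU2]⟩
    · rintro x ⟨s1, s2, hm2, hbr, rfl⟩
      exact br1_eu2_le s1 s2 hm2 hbr
  · apply le_csSup
    · exact ⟨1, by rintro x ⟨s1, s2, hm2, hbr, rfl⟩; exact br1_eu2_le s1 s2 hm2 hbr⟩
    · exact ⟨pt PD.D, pt PD.D, mixedPtPD PD.D, br1_DD, by rw [euPD]; simp [pt, pdU2]⟩

theorem pd_pce_iff :
    (∀ s : (PD → ℝ) × (PD → ℝ), IsProfile s →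
      (IsPCE pdU1 pdU2 s ↔ 1 ≤ min (EU pdU1 s.1 s.2) (EU pdU2 s.1 s.2))) ∧
    IsPCE pdU1 pdU2 (pt PD.C, pt PD.C) ∧ IsPCE pdU1 pdU2 (pt PD.D, pt PD.D)  := by
  have key : ∀ s : (PD → ℝ) × (PD → ℝ), IsProfile s →
      (IsPCE pdU1 pdU2 s ↔ 1 ≤ min (EU pdU1 s.1 s.2) (EU pdU2 s.1 s.2)) := by
    intro s hs
    constructor
    · rintro ⟨_, h1, h2⟩
      rw [bu1_eq] at h1; rw [bu2_eq] at h2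
      exact le_min h1 h2
    · intro h
      exact ⟨hs, by rw [bu1_eq]; exact le_trans h (min_le_left _ _),
        by rw [bu2_eq]; exact le_trans h (min_le_right _ _)⟩
  refine ⟨key, ?_, ?_⟩
  · apply (key _ ⟨mixedPtPD PD.C, mixedPtPD PD.C⟩).mpr
    rw [euPD, euPD]; simp [pt, pdU1, pdU2]
  · apply (key _ ⟨mixedPtPD PD.D, mixedPtPD PD.D⟩).mpr
    rw [euPD, euPD]; simp [pt, pdU1, pdU2]
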